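/- For any K > 0 and C > 1 there exists m_0(C) such that for all m ≥ m_0(C): P( max_{0 ≤ k 2^{-2m} ≤ K} | T_{m+1}(k) 2^{-2(m+1)} − k 2^{-2m} | ≥ ((3/2) C K log_* K)^{1/2} m^{1/2} 2^{-m} ) ≤ 2 (K 2^{2m})^{1-C}. -/

import Mathlib

open MeasureTheory ProbabilityTheory Filter
open Finset
open scoped ENNReal NNReal

set_option linter.unusedSectionVars false
set_option maxHeartbeats 1000000

/-- `log_*(x) = max(1, log x)`. -/
noncomputable def logStar (x : ℝ) : ℝ := max 1 (Real.log x)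



/-- number of "successful" blocks among the first `n` two-step blocks -/
noncomputable def zcAux (x : ℕ → ℝ) (n : ℕ) : ℕ :=
  ∑ j ∈ Finset.range n, if x (2*j+1) = x (2*j+2) then 1 else 0

lemma zcAux_mono (x : ℕ → ℝ) : Monotone (zcAux x) := by
  intro a b hab
  exact Finset.sum_le_sum_of_subset (Finset.range_subset_range.2 hab)

lemma zcAux_succ (x : ℕ → ℝ) (n : ℕ) :
    zcAux x (n+1) = zcAux x n + if x (2*n+1) = x (2*n+2) then 1 else 0 :=
  Finset.sum_range_succ _ _

lemma zcAux_succ_le (x : ℕ → ℝ) (n : ℕ) : zcAux x (n+1) ≤ zcAux x n + 1 := by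
  rw [zcAux_succ]; split <;> omega

lemma zcAux_sInf (x : ℕ → ℝ) (k : ℕ) (hex : ∃ n, k ≤ zcAux x n) :
    zcAux x (sInf {i | k ≤ zcAux x i}) = k := by
  have hmem : k ≤ zcAux x (sInf {i | k ≤ zcAux x i}) := Nat.sInf_mem hex
  rcases Nat.eq_zero_or_eq_succ_pred (sInf {i | k ≤ zcAux x i}) with h0 | hsucc
  · rw [h0] at hmem ⊢
    simp only [zcAux, Finset.range_zero, Finset.sum_empty] at hmem ⊢
    omega
  · set J := sInf {i | k ≤ zcAux x i} with hJ
    have hlt : J - 1 < sInf {i | k ≤ zcAux x i} := by rw [← hJ]; omega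
    have hnot' := Nat.notMem_of_lt_sInf hlt
    have hnot : ¬ (k ≤ zcAux x (J - 1)) := by
      simpa only [Set.mem_setOf_eq] using hnot'
    have hle : zcAux x J ≤ zcAux x (J-1) + 1 := by
      have := zcAux_succ_le x (J-1)
      rwa [show J - 1 + 1 = J by omega] at this
    omega

lemma sblock (x : ℕ → ℝ) (s : ℕ → ℝ)
    (hs : ∀ n, s n = ∑ k ∈ Finset.range n, x (k+1)) (j : ℕ) :
    s (2*j+2) - s (2*j) = x (2*j+1) + x (2*j+2) := by
  have hstep : ∀ n, s (n+1) = s n + x (n+1) := by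
    intro n; rw [hs, hs, Finset.sum_range_succ]
  have h1 := hstep (2*j+1)
  have h2 := hstep (2*j)
  rw [show 2*j+1+1 = 2*j+2 by ring] at h1
  rw [show 2*j+1 = 2*j+1 by rfl] at h2
  linarith

lemma sodd (x : ℕ → ℝ) (s : ℕ → ℝ)
    (hs : ∀ n, s n = ∑ k ∈ Finset.range n, x (k+1)) (j : ℕ) :
    s (2*j+1) - s (2*j) = x (2*j+1) := by
  rw [hs, hs, Finset.sum_range_succ]; ring

theorem t_eq_struct (x : ℕ → ℝ) (s : ℕ → ℝ) (t : ℕ → ℕ)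
    (hx : ∀ k, x k = 1 ∨ x k = -1)
    (hs : ∀ n, s n = ∑ k ∈ Finset.range n, x (k+1))
    (ht0 : t 0 = 0)
    (htsucc : ∀ k, t (k+1) = sInf {n : ℕ | t k < n ∧ |s n - s (t k)| = 2}) :
    ∀ k, (∃ n, k ≤ zcAux x n) → t k = 2 * sInf {i | k ≤ zcAux x i} := by
  intro k
  induction k with
  | zero =>
    intro _
    have h0 : (0:ℕ) ∈ {i | 0 ≤ zcAux x i} := by simp
    have : sInf {i | 0 ≤ zcAux x i} = 0 := Nat.eq_zero_of_le_zero (Nat.sInf_le h0)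
    rw [this, ht0]
  | succ k ih =>
    intro hex'
    obtain ⟨N, hN⟩ := hex'
    have hex : ∃ n, k ≤ zcAux x n := ⟨N, by omega⟩
    have iht := ih hex
    set f := sInf {i | k ≤ zcAux x i} with hf
    set f' := sInf {i | k+1 ≤ zcAux x i} with hf'
    have hzf : zcAux x f = k := zcAux_sInf x k hex
    have hzf' : zcAux x f' = k + 1 := zcAux_sInf x (k+1) ⟨N, hN⟩
    have hff' : f < f' := by
      have hle : f ≤ f' := Nat.sInf_le (show f' ∈ {i | k ≤ zcAux x i} from by
        simp only [Set.mem_setOf_eq]; omega)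
      rcases lt_or_eq_of_le hle with h | h
      · exact h
      · exfalso; rw [h] at hzf; omega
    have hplateau : ∀ j, f ≤ j → j < f' → zcAux x j = k := by
      intro j hfj hjf'
      have h1 : k ≤ zcAux x j := hzf ▸ zcAux_mono x hfj
      have h2' := Nat.notMem_of_lt_sInf (show j < sInf {i | k+1 ≤ zcAux x i} from by
        rw [← hf']; omega)
      have h2 : ¬ (k+1 ≤ zcAux x j) := by simpa only [Set.mem_setOf_eq] using h2'
      omega
    have hflat : ∀ j, f ≤ j → j < f' → s (2*j) = s (2*f) := by
      intro j
      induction j with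
      | zero => intro h1 _; have : f = 0 := by omega
                rw [this]
      | succ j ihj =>
        intro h1 h2
        rcases Nat.lt_or_ge f (j+1) with hlt | hge
        · have hfj : f ≤ j := by omega
          have hjf' : j < f' := by omega
          have hprev := ihj hfj hjf'
          -- block j is a failure
          have hfail : ¬ (x (2*j+1) = x (2*j+2)) := by
            intro heq
            have := zcAux_succ x j
            rw [if_pos heq] at this
            have e1 := hplateau j hfj hjf'
            have e2 := hplateau (j+1) (by omega) h2
            omega
          have hxsum : x (2*j+1) + x (2*j+2) = 0 := by
            rcases hx (2*j+1) with h | h <;> rcases hx (2*j+2) with h' | h'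
            · exact absurd (h.trans h'.symm) hfail
            · rw [h, h']; ring
            · rw [h, h']; ring
            · exact absurd (h.trans h'.symm) hfail
          have := sblock x s hs j
          rw [hxsum] at this
          have : s (2*(j+1)) = s (2*j) := by
            have h2j : 2*(j+1) = 2*j+2 := by ring
            rw [h2j]; linarith
          rw [this, hprev]
        · have : f = j + 1 := by omega
          rw [this]
    -- the last block (f'-1) is a success
    have hlast : |s (2*f') - s (2*f)| = 2 := by
      obtain ⟨q, hq⟩ : ∃ q, f' = q + 1 := ⟨f' - 1, by omega⟩
      have hfq : f ≤ q := by omega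
      have hqf' : q < f' := by omega
      have hsucc : x (2*q+1) = x (2*q+2) := by
        by_contra hne
        have := zcAux_succ x q
        rw [if_neg hne] at this
        have e1 := hplateau q hfq hqf'
        rw [← hq] at this
        omega
      have hblock := sblock x s hs q
      have hsq : s (2*q) = s (2*f) := hflat q hfq hqf'
      have h2 : s (2*f') - s (2*f) = x (2*q+1) + x (2*q+2) := by
        rw [hq, show 2*(q+1) = 2*q+2 by ring]
        rw [hsq] at hblock
        linarith
      rw [h2, ← hsucc]
      rcases hx (2*q+1) with h | h <;> rw [h] <;> norm_num
    have hmin : ∀ n, 2*f < n → n < 2*f' → |s n - s (2*f)| ≠ 2 := by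
      intro n hn1 hn2
      rcases Nat.even_or_odd n with ⟨j, hj⟩ | ⟨j, hj⟩
      · have hj' : n = 2*j := by omega
        have hfj : f ≤ j := by omega
        have hjf' : j < f' := by omega
        rcases Nat.lt_or_ge f j with hlt | hge
        · rw [hj', hflat j hfj hjf']
          simp
        · omega
      · have hj' : n = 2*j+1 := by omega
        have hfj : f ≤ j := by omega
        have hjf' : j < f' := by omega
        have hso := sodd x s hs j
        have hsf : s (2*j) = s (2*f) := hflat j hfj hjf'
        rw [hj', show s (2*j+1) - s (2*f) = x (2*j+1) + (s (2*j) - s (2*f)) by linarith,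
          hsf]
        rcases hx (2*j+1) with h | h <;> rw [h] <;> norm_num
    -- conclude
    rw [htsucc, iht]
    have hmem : 2*f' ∈ {n : ℕ | 2*f < n ∧ |s n - s (2*f)| = 2} := by
      constructor
      · omega
      · exact hlast
    apply le_antisymm
    · exact Nat.sInf_le hmem
    · apply le_csInf ⟨2*f', hmem⟩
      intro b hb
      by_contra hlt
      push_neg at hlt
      exact hmin b hb.1 hlt hb.2

theorem t_le_iff_struct (x : ℕ → ℝ) (s : ℕ → ℝ) (t : ℕ → ℕ)
    (hx : ∀ k, x k = 1 ∨ x k = -1)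
    (hs : ∀ n, s n = ∑ k ∈ Finset.range n, x (k+1))
    (ht0 : t 0 = 0)
    (htsucc : ∀ k, t (k+1) = sInf {n : ℕ | t k < n ∧ |s n - s (t k)| = 2})
    (k : ℕ) (hex : ∃ n, k ≤ zcAux x n) :
    ∀ n, (t k ≤ 2*n ↔ k ≤ zcAux x n) := by
  intro n
  rw [t_eq_struct x s t hx hs ht0 htsucc k hex]
  constructor
  · intro h
    have hfn : sInf {i | k ≤ zcAux x i} ≤ n := by omega
    calc k = zcAux x (sInf {i | k ≤ zcAux x i}) := (zcAux_sInf x k hex).symm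
    _ ≤ zcAux x n := zcAux_mono x hfn
  · intro h
    have : sInf {i | k ≤ zcAux x i} ≤ n := Nat.sInf_le h
    omega

lemma wsum_eq (x : ℕ → ℝ) (hx : ∀ k, x k = 1 ∨ x k = -1) (n : ℕ) :
    ∑ j ∈ Finset.range n, x (2*j+1) * x (2*j+2) = 2*(zcAux x n : ℝ) - n := by
  induction n with
  | zero => simp [zcAux]
  | succ n ih =>
    rw [Finset.sum_range_succ, ih, zcAux_succ]
    by_cases heq : x (2*n+1) = x (2*n+2)
    · rw [if_pos heq]
      have : x (2*n+1) * x (2*n+2) = 1 := by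
        rw [heq]; rcases hx (2*n+2) with h | h <;> rw [h] <;> norm_num
      rw [this]; push_cast; ring
    · rw [if_neg heq]
      have : x (2*n+1) * x (2*n+2) = -1 := by
        rcases hx (2*n+1) with h | h <;> rcases hx (2*n+2) with h' | h'
        · exact absurd (h.trans h'.symm) heq
        · rw [h, h']; ring
        · rw [h, h']; ring
        · exact absurd (h.trans h'.symm) heq
      rw [this]; push_cast; ring



section ProbAux

variable {Ω : Type*} [MeasurableSpace Ω] {P : Measure Ω} [IsProbabilityMeasure P]

lemma integrable_of_ae_bdd {f : Ω → ℝ} (hm : Measurable f) (h : ∀ᵐ ω ∂P, |f ω| ≤ 1) :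
    Integrable f P :=
  (integrable_const (1:ℝ)).mono' hm.aestronglyMeasurable h

lemma pm_one_ae {f : Ω → ℝ} (hm : Measurable f)
    (h1 : P {ω | f ω = 1} = 1/2) (h2 : P {ω | f ω = -1} = 1/2) :
    ∀ᵐ ω ∂P, f ω = 1 ∨ f ω = -1 := by
  have hA : MeasurableSet {ω | f ω = 1} := hm (measurableSet_singleton 1)
  have hB : MeasurableSet {ω | f ω = -1} := hm (measurableSet_singleton (-1))
  have hdisj : Disjoint {ω | f ω = 1} {ω | f ω = -1} := by
    rw [Set.disjoint_left]
    intro a ha hb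
    simp only [Set.mem_setOf_eq] at ha hb
    rw [ha] at hb; norm_num at hb
  have hU : P ({ω | f ω = 1} ∪ {ω | f ω = -1}) = 1 := by
    rw [measure_union hdisj hB, h1, h2, ENNReal.div_add_div_same]
    rw [show ((1:ℝ≥0∞)+1) = 2 from one_add_one_eq_two]
    exact ENNReal.div_self (two_ne_zero) (ENNReal.ofNat_ne_top)
  have hcompl : P ({ω | f ω = 1} ∪ {ω | f ω = -1})ᶜ = 0 := by
    rw [measure_compl (hA.union hB) (measure_ne_top _ _), hU]
    simp
  have hset : {a | ¬(f a = 1 ∨ f a = -1)} = ({ω | f ω = 1} ∪ {ω | f ω = -1})ᶜ := by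
    ext ω; simp [not_or]
  rw [ae_iff, hset]
  exact hcompl

lemma pm_one_abs_le {f : Ω → ℝ} (hm : Measurable f)
    (h1 : P {ω | f ω = 1} = 1/2) (h2 : P {ω | f ω = -1} = 1/2) :
    ∀ᵐ ω ∂P, |f ω| ≤ 1 := by
  filter_upwards [pm_one_ae hm h1 h2] with ω hω
  rcases hω with h | h <;> rw [h] <;> norm_num

lemma pm_one_integral {f : Ω → ℝ} (hm : Measurable f)
    (h1 : P {ω | f ω = 1} = 1/2) (h2 : P {ω | f ω = -1} = 1/2) :
    ∫ ω, f ω ∂P = 0 := by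
  have hA : MeasurableSet {ω | f ω = 1} := hm (measurableSet_singleton 1)
  have hB : MeasurableSet {ω | f ω = -1} := hm (measurableSet_singleton (-1))
  have hae : f =ᵐ[P] fun ω =>
      ({ω | f ω = 1}).indicator (fun _ => (1:ℝ)) ω
      + ({ω | f ω = -1}).indicator (fun _ => (-1:ℝ)) ω := by
    filter_upwards [pm_one_ae hm h1 h2] with ω hω
    rcases hω with h | h
    · rw [Set.indicator_of_mem (by exact h), Set.indicator_of_notMem (by
        simp only [Set.mem_setOf_eq]; rw [h]; norm_num)]
      rw [h]; norm_num
    · rw [Set.indicator_of_notMem (by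
        simp only [Set.mem_setOf_eq]; rw [h]; norm_num), Set.indicator_of_mem (by exact h)]
      rw [h]; norm_num
  rw [integral_congr_ae hae, integral_add
      ((integrable_const (1:ℝ)).indicator hA) ((integrable_const (-1:ℝ)).indicator hB),
    integral_indicator_const _ hA, integral_indicator_const _ hB, measureReal_def, measureReal_def, h1, h2]
  simp [ENNReal.toReal_div]

lemma ae_prod_abs_le {ι : Type*} (f : ι → Ω → ℝ)
    (hbd : ∀ i, ∀ᵐ ω ∂P, |f i ω| ≤ 1) (F : Finset ι) :
    ∀ᵐ ω ∂P, |∏ i ∈ F, f i ω| ≤ 1 := by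
  classical
  induction F using Finset.induction_on with
  | empty => simp
  | insert a F ha ih =>
    filter_upwards [ih, hbd a] with ω h1 h2
    rw [Finset.prod_insert ha, abs_mul]
    calc |f a ω| * |∏ i ∈ F, f i ω| ≤ 1 * 1 :=
      mul_le_mul h2 h1 (abs_nonneg _) zero_le_one
    _ = 1 := by norm_num

lemma integral_finset_prod_eq_prod {ι : Type*} (f : ι → Ω → ℝ)
    (hind : iIndepFun f P) (hmeas : ∀ i, Measurable (f i))
    (hbd : ∀ i, ∀ᵐ ω ∂P, |f i ω| ≤ 1) (F : Finset ι) :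
    ∫ ω, ∏ i ∈ F, f i ω ∂P = ∏ i ∈ F, ∫ ω, f i ω ∂P := by
  classical
  induction F using Finset.induction_on with
  | empty => simp
  | insert a F ha ih =>
    have hIF : IndepFun (∏ i ∈ F, f i) (f a) P :=
      iIndepFun.indepFun_finset_prod_of_notMem hind hmeas ha
    have hprodfun : (∏ i ∈ F, f i) = fun ω => ∏ i ∈ F, f i ω := by
      ext ω; simp [Finset.prod_apply]
    have hint1 : Integrable (∏ i ∈ F, f i) P := by
      rw [hprodfun]
      exact integrable_of_ae_bdd (Finset.measurable_prod F (fun i _ => hmeas i))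
        (ae_prod_abs_le f hbd F)
    have hint2 : Integrable (f a) P := integrable_of_ae_bdd (hmeas a) (hbd a)
    have key : ∫ ω, (∏ i ∈ F, f i ω) * f a ω ∂P
        = (∫ ω, ∏ i ∈ F, f i ω ∂P) * ∫ ω, f a ω ∂P := by
      have h := IndepFun.integral_mul_eq_mul_integral hIF hint1.aestronglyMeasurable hint2.aestronglyMeasurable
      rw [hprodfun] at h
      simpa using h
    simp only [Finset.prod_insert ha]
    calc ∫ ω, f a ω * ∏ i ∈ F, f i ω ∂P = ∫ ω, (∏ i ∈ F, f i ω) * f a ω ∂P := by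
          simp_rw [mul_comm]
    _ = (∫ ω, ∏ i ∈ F, f i ω ∂P) * ∫ ω, f a ω ∂P := key
    _ = (∫ ω, f a ω ∂P) * ∏ i ∈ F, ∫ ω, f i ω ∂P := by rw [ih]; ring


lemma chernoff_pm (Y : ℕ → Ω → ℝ) (n : ℕ) (hn : 0 < n)
    (hYmeas : ∀ j, Measurable (Y j))
    (hbd : ∀ j, ∀ᵐ ω ∂P, Y j ω = 1 ∨ Y j ω = -1)
    (hprod : ∀ S : Finset ℕ, S.Nonempty → ∫ ω, ∏ j ∈ S, Y j ω ∂P = 0)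
    (s : ℝ) (hs : 0 ≤ s) :
    P {ω | s ≤ ∑ j ∈ Finset.range n, Y j ω} ≤ ENNReal.ofReal (Real.exp (-(s^2) / (2*n))) := by
  classical
  set θ := s / n with hθdef
  have hnR : (0:ℝ) < n := by exact_mod_cast hn
  have hθ : 0 ≤ θ := div_nonneg hs hnR.le
  have habs : ∀ j, ∀ᵐ ω ∂P, |Y j ω| ≤ 1 := fun j => by
    filter_upwards [hbd j] with ω h; rcases h with h|h <;> rw [h] <;> norm_num
  have hXmeas : Measurable (fun ω => ∑ j ∈ Finset.range n, Y j ω) :=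
    Finset.measurable_sum _ (fun j _ => hYmeas j)
  have hint : Integrable (fun ω => Real.exp (θ * ∑ j ∈ Finset.range n, Y j ω)) P := by
    apply (integrable_const (Real.exp (θ * n))).mono'
      ((hXmeas.const_mul θ).exp.aestronglyMeasurable)
    filter_upwards [ae_all_iff.2 hbd] with ω hω
    rw [Real.norm_eq_abs, abs_of_pos (Real.exp_pos _), Real.exp_le_exp]
    apply mul_le_mul_of_nonneg_left _ hθ
    calc ∑ j ∈ Finset.range n, Y j ω ≤ ∑ j ∈ Finset.range n, 1 := by
          apply Finset.sum_le_sum; intro j _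
          rcases hω j with h|h <;> rw [h] <;> norm_num
    _ = n := by simp
  have hmgf : mgf (fun ω => ∑ j ∈ Finset.range n, Y j ω) P θ = Real.cosh θ ^ n := by
    rw [mgf]
    have hcongr : (fun ω => Real.exp (θ * ∑ j ∈ Finset.range n, Y j ω))
        =ᵐ[P] fun ω => ∏ j ∈ Finset.range n, (Real.sinh θ * Y j ω + Real.cosh θ) := by
      filter_upwards [ae_all_iff.2 hbd] with ω hω
      rw [Finset.mul_sum, Real.exp_sum]
      apply Finset.prod_congr rfl
      intro j hj
      rcases hω j with h|h <;> rw [h]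
      · rw [mul_one, mul_one, add_comm, Real.cosh_add_sinh]
      · rw [mul_neg_one, mul_neg_one, ← Real.cosh_sub_sinh]; ring
    rw [integral_congr_ae hcongr]
    have hexpand : ∀ ω : Ω, ∏ j ∈ Finset.range n, (Real.sinh θ * Y j ω + Real.cosh θ)
        = ∑ t ∈ (Finset.range n).powerset,
            (Real.sinh θ ^ t.card * Real.cosh θ ^ (n - t.card)) * ∏ j ∈ t, Y j ω := by
      intro ω
      rw [Finset.prod_add]
      apply Finset.sum_congr rfl
      intro t ht
      rw [Finset.prod_mul_distrib, Finset.prod_const, Finset.prod_const,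
        Finset.card_sdiff_of_subset (Finset.mem_powerset.1 ht), Finset.card_range]
      ring
    simp_rw [hexpand]
    rw [integral_finset_sum]
    · rw [Finset.sum_eq_single (∅ : Finset ℕ)]
      · simp
      · intro t ht htne
        rw [MeasureTheory.integral_const_mul _ _, hprod t (Finset.nonempty_of_ne_empty htne), mul_zero]
      · intro h
        simp at h
    · intro t ht
      exact (integrable_of_ae_bdd (Finset.measurable_prod _ (fun j _ => hYmeas j))
        (ae_prod_abs_le Y habs t)).const_mul _
  have hchern := measure_ge_le_exp_mul_mgf
    (X := fun ω => ∑ j ∈ Finset.range n, Y j ω) (μ := P) (t := θ) s hθ hint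
  rw [hmgf] at hchern
  have hb : Real.exp (-θ*s) * Real.cosh θ ^ n ≤ Real.exp (-(s^2) / (2*n)) := by
    have h1 : Real.cosh θ ^ n ≤ Real.exp (θ^2/2) ^ n :=
      pow_le_pow_left₀ (Real.cosh_pos θ).le (Real.cosh_le_exp_half_sq θ) n
    have h2 : Real.exp (θ^2/2) ^ n = Real.exp (n * (θ^2/2)) := by
      rw [← Real.exp_nat_mul]
    calc Real.exp (-θ*s) * Real.cosh θ ^ n ≤ Real.exp (-θ*s) * Real.exp (n*(θ^2/2)) := by
          rw [← h2]; exact mul_le_mul_of_nonneg_left h1 (Real.exp_pos _).le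
    _ = Real.exp (-θ*s + n*(θ^2/2)) := (Real.exp_add _ _).symm
    _ = Real.exp (-(s^2) / (2*n)) := by
          congr 1
          rw [hθdef]
          field_simp
          ring
  rw [ENNReal.le_ofReal_iff_toReal_le (measure_ne_top _ _) (Real.exp_pos _).le]
  exact hchern.trans hb

end ProbAux



lemma nat_sq_le_two_pow : ∀ m : ℕ, 4 ≤ m → m^2 ≤ 2^m := by
  intro m hm
  induction m, hm using Nat.le_induction with
  | base => norm_num
  | succ n hn ih =>
    have h1 : (n+1)^2 ≤ 2 * n^2 := by nlinarith
    calc (n+1)^2 ≤ 2 * n^2 := h1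
    _ ≤ 2 * 2^n := by omega
    _ = 2^(n+1) := by ring

/-- Let `{X_m(k) : m ≥ 0, k ≥ 1}` be an array of i.i.d. random variables with
`P(X_m(k)=1)=P(X_m(k)=−1)=1/2`, `S_m(n)=Σ_{k=1}^n X_m(k)`, and stopping times `T_m(0)=0`,
`T_m(k+1)=min{n > T_m(k) : |S_m(n)−S_m(T_m(k))|=2}`.  Then for any `K > 0` and `C > 1`
there exists `m₀(C)` such that for all `m ≥ m₀(C)`:
`P( max_{0 ≤ k 2^{-2m} ≤ K} |T_{m+1}(k) 2^{-2(m+1)} − k 2^{-2m}|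
    ≥ ((3/2) C K log_* K)^{1/2} m^{1/2} 2^{-m} ) ≤ 2 (K 2^{2m})^{1−C}`. -/
theorem statement1 {Ω : Type*} [MeasurableSpace Ω] (P : Measure Ω) [IsProbabilityMeasure P]
    (X : ℕ → ℕ → Ω → ℝ)
    (hmeas : ∀ m k, Measurable (X m k))
    (hindep : iIndepFun (fun p : ℕ × ℕ => X p.1 p.2) P)
    (hdist : ∀ m k, P {ω | X m k ω = 1} = 1/2 ∧ P {ω | X m k ω = -1} = 1/2)
    (S : ℕ → ℕ → Ω → ℝ)
    (hS : ∀ m n ω, S m n ω = ∑ k ∈ Finset.range n, X m (k+1) ω)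
    (T : ℕ → ℕ → Ω → ℕ)
    (hT0 : ∀ m ω, T m 0 ω = 0)
    (hTsucc : ∀ m k ω, T m (k+1) ω =
      sInf {n : ℕ | T m k ω < n ∧ |S m n ω - S m (T m k ω) ω| = 2}) :
    ∀ K C : ℝ, 0 < K → 1 < C → ∃ m₀ : ℕ, ∀ m : ℕ, m₀ ≤ m →
      P {ω | ∃ k : ℕ, (k : ℝ) * (2:ℝ)^(-(2*(m:ℤ))) ≤ K ∧
          ((3/2) * C * K * logStar K) ^ ((1:ℝ)/2) * (m : ℝ) ^ ((1:ℝ)/2) * (2:ℝ)^(-(m:ℤ))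
            ≤ |(T (m+1) k ω : ℝ) * (2:ℝ)^(-(2*((m:ℤ)+1))) - (k : ℝ) * (2:ℝ)^(-(2*(m:ℤ)))|}
        ≤ ENNReal.ofReal (2 * (K * 2^(2*m)) ^ (1 - C)) := by
  intro K C hK hC
  classical
  have hC0 : (0:ℝ) < C := lt_trans one_pos hC
  set L := logStar K with hLdef
  have hL1 : (1:ℝ) ≤ L := le_max_left _ _
  have hLlog : Real.log K ≤ L := le_max_right _ _
  have hL0 : (0:ℝ) < L := lt_of_lt_of_le one_pos hL1
  set A := (3/2) * C * K * L with hAdef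
  have hA : 0 < A := by
    have h1 : (0:ℝ) < (3/2) * C := by linarith
    have h2 : (0:ℝ) < K * L := mul_pos hK hL0
    calc (0:ℝ) < ((3/2)*C) * (K*L) := mul_pos h1 h2
    _ = A := by rw [hAdef]; ring
  set c := Real.sqrt A with hcdef
  have hc : 0 < c := Real.sqrt_pos.2 hA
  have hc2 : c^2 = A := Real.sq_sqrt hA.le
  refine ⟨max 20 (max 4 (max (⌈200*c/K⌉₊+1) (max (⌈50/c⌉₊+1) (⌈1/K⌉₊+1)))), ?_⟩
  intro m hm
  have hm20 : 20 ≤ m := le_trans (le_max_left _ _) hm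
  have hm4 : (4:ℕ) ≤ m := le_trans (le_trans (le_max_left _ _) (le_max_right _ _)) hm
  have hmc1 : ⌈200*c/K⌉₊ + 1 ≤ m :=
    le_trans (le_trans (le_trans (le_max_left _ _) (le_max_right _ _)) (le_max_right _ _)) hm
  have hmc2 : ⌈50/c⌉₊ + 1 ≤ m :=
    le_trans (le_trans (le_trans (le_trans (le_max_left _ _) (le_max_right _ _))
      (le_max_right _ _)) (le_max_right _ _)) hm
  have hmc3 : ⌈1/K⌉₊ + 1 ≤ m :=
    le_trans (le_trans (le_trans (le_trans (le_max_right _ _) (le_max_right _ _))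
      (le_max_right _ _)) (le_max_right _ _)) hm
  have h200c : 200*c/K ≤ (m:ℝ) :=
    le_trans (Nat.le_ceil _) (by exact_mod_cast le_trans (Nat.le_succ _) hmc1)
  have h50c : 50/c ≤ (m:ℝ) :=
    le_trans (Nat.le_ceil _) (by exact_mod_cast le_trans (Nat.le_succ _) hmc2)
  have h1K : 1/K ≤ (m:ℝ) :=
    le_trans (Nat.le_ceil _) (by exact_mod_cast le_trans (Nat.le_succ _) hmc3)
  have hm1R : (1:ℝ) ≤ m := by
    have : (1:ℕ) ≤ m := by omega
    exact_mod_cast this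
  have hm20R : (20:ℝ) ≤ m := by exact_mod_cast hm20
  have h2m : (m:ℝ) ≤ 2^m := by exact_mod_cast (Nat.lt_two_pow_self (n := m)).le
  have hm2R : (m:ℝ)^2 ≤ 2^m := by exact_mod_cast nat_sq_le_two_pow m hm4
  have hsm1 : (1:ℝ) ≤ Real.sqrt m := by
    rw [show (1:ℝ) = Real.sqrt 1 by simp]
    exact Real.sqrt_le_sqrt hm1R
  have hsm0 : (0:ℝ) < Real.sqrt m := lt_of_lt_of_le one_pos hsm1
  have hsmsq : (Real.sqrt m)^2 = (m:ℝ) := Real.sq_sqrt (by linarith)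
  have hsmm : Real.sqrt m ≤ (m:ℝ) := by nlinarith [hsm1, hsmsq]
  set B2 := (2:ℝ)^m with hB2
  have hB2pos : (0:ℝ) < B2 := by rw [hB2]; positivity
  have h4m : (4:ℝ)^m = B2 * B2 := by rw [hB2, ← mul_pow]; norm_num
  have h4mpos : (0:ℝ) < (4:ℝ)^m := by positivity
  set Q := K * (4:ℝ)^m with hQdef
  have hQpos : (0:ℝ) < Q := by rw [hQdef]; positivity
  have hmB2 : (m:ℝ) ≤ B2 := by rw [hB2]; exact h2m
  set xm := 4*c*Real.sqrt m * B2 with hxmdef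
  have hxmpos : (0:ℝ) < xm := by rw [hxmdef]; positivity
  have hQ1 : (1:ℝ) ≤ Q := by
    have h1 : (1:ℝ) ≤ K * m := by
      rw [div_le_iff₀ hK] at h1K
      nlinarith [h1K]
    have h2 : (m:ℝ) ≤ (4:ℝ)^m := by
      refine le_trans h2m ?_
      exact pow_le_pow_left₀ (by norm_num) (by norm_num) m
    calc (1:ℝ) ≤ K * m := h1
    _ ≤ K * (4:ℝ)^m := mul_le_mul_of_nonneg_left h2 hK.le
  have hx200 : (200:ℝ) ≤ xm := by
    have h1 : (50:ℝ) ≤ c * m := by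
      rw [div_le_iff₀ hc] at h50c
      nlinarith [h50c]
    have h2 : (m:ℝ) ≤ Real.sqrt m * B2 := by
      calc (m:ℝ) = 1 * m := (one_mul _).symm
      _ ≤ Real.sqrt m * B2 := mul_le_mul hsm1 hmB2 (by linarith) hsm0.le
    calc (200:ℝ) = 4 * 50 := by norm_num
    _ ≤ 4 * (c * m) := by linarith
    _ ≤ 4 * (c * (Real.sqrt m * B2)) := by
        have := mul_le_mul_of_nonneg_left h2 hc.le
        linarith
    _ = xm := by rw [hxmdef]; ring
  have hx50 : 50 * xm ≤ Q := by
    have h1 : 200*c ≤ K*m := by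
      rw [div_le_iff₀ hK] at h200c
      nlinarith [h200c]
    have h2 : 200*c*Real.sqrt m ≤ K * B2 := by
      calc 200*c*Real.sqrt m ≤ (K*m)*Real.sqrt m :=
        mul_le_mul_of_nonneg_right h1 hsm0.le
      _ ≤ (K*m)*m := by
          apply mul_le_mul_of_nonneg_left hsmm
          positivity
      _ = K*(m:ℝ)^2 := by ring
      _ ≤ K*2^m := mul_le_mul_of_nonneg_left hm2R hK.le
      _ = K * B2 := by rw [hB2]
    calc 50*xm = (200*c*Real.sqrt m)*B2 := by rw [hxmdef]; ring
    _ ≤ (K*B2)*B2 := mul_le_mul_of_nonneg_right h2 hB2pos.le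
    _ = Q := by rw [hQdef, h4m]; ring
  have hlogQ : Real.log Q ≤ L * (1 + 1.3862944 * m) := by
    have hlog4 : Real.log ((4:ℝ)^m) = m * Real.log 4 := by
      rw [Real.log_pow]
    have h4eq : Real.log (4:ℝ) = 2 * Real.log 2 := by
      rw [show (4:ℝ) = 2^2 by norm_num, Real.log_pow]
      push_cast; ring
    have hl2 : Real.log 2 < 0.6931472 := lt_trans Real.log_two_lt_d9 (by norm_num)
    have hl2pos : (0:ℝ) < Real.log 2 := Real.log_pos (by norm_num)
    rw [hQdef, Real.log_mul (ne_of_gt hK) (ne_of_gt h4mpos), hlog4, h4eq]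
    have h2 : (m:ℝ) * (2*Real.log 2) ≤ 1.3862944 * m := by nlinarith
    have h3 : 1.3862944*(m:ℝ) ≤ L * (1.3862944*m) := by nlinarith
    nlinarith
  have hkey : ∀ s n : ℝ, 0 < n → xm/2 - 1 ≤ s → 2*n ≤ 4*Q + xm →
      Real.exp (-(s^2)/(2*n)) ≤ Q^(-C) := by
    intro s n hn hsx h2n
    rw [Real.rpow_def_of_pos hQpos, Real.exp_le_exp]
    have hlogQ0 : 0 ≤ Real.log Q := Real.log_nonneg hQ1
    have hs0 : (0:ℝ) ≤ s := by linarith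
    have hcore : C * Real.log Q * (2*n) ≤ s^2 := by
      have hsq : (xm/2 - 1)^2 ≤ s^2 :=
        pow_le_pow_left₀ (by linarith only [hx200]) hsx 2
      have h402 : 2*n ≤ (4 + 1/50)*Q := by linarith
      have hxm99 : (99/100)*(xm/2) ≤ xm/2 - 1 := by linarith
      have hxmsq : xm^2 = 16 * A * m * (4:ℝ)^m := by
        calc xm^2 = 16*c^2*(Real.sqrt m)^2*(B2*B2) := by rw [hxmdef]; ring
        _ = 16 * A * m * (4:ℝ)^m := by rw [hc2, hsmsq, ← h4m]
      have hscalar : (4+1/50)*(1+1.3862944*(m:ℝ)) ≤ (9801/40000)*16*(3/2)*m := by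
        linarith only [hm20R]
      have hp : (0:ℝ) < C*(K*L)*(4:ℝ)^m := by positivity
      have hfin : C * (L*(1+1.3862944*m)) * ((4+1/50)*Q) ≤ (9801/40000)*(16*A*m*(4:ℝ)^m) := by
        rw [hQdef, hAdef]
        have hh := mul_le_mul_of_nonneg_left hscalar (le_of_lt hp)
        linarith only [hh]
      have hlhs : C * Real.log Q * ((4+1/50)*Q) ≤ C * (L*(1+1.3862944*m)) * ((4+1/50)*Q) := by
        apply mul_le_mul_of_nonneg_right _ (by positivity)
        exact mul_le_mul_of_nonneg_left hlogQ hC0.le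
      have hmono : C * Real.log Q * (2*n) ≤ C * Real.log Q * ((4+1/50)*Q) :=
        mul_le_mul_of_nonneg_left h402 (mul_nonneg hC0.le hlogQ0)
      have hsq2 : ((99/100)*(xm/2))^2 ≤ (xm/2-1)^2 :=
        pow_le_pow_left₀ (by linarith only [hxmpos]) hxm99 2
      have hrhs : ((99/100)*(xm/2))^2 = (9801/40000)*(16*A*m*(4:ℝ)^m) := by
        rw [← hxmsq]; ring
      linarith only [hmono, hlhs, hfin, hrhs, hsq2, hsq]
    rw [div_le_iff₀ (by linarith only [hn] : (0:ℝ) < 2*n)]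
    linarith only [hcore]
  -- probabilistic setup
  set M := m + 1 with hMdef
  set W : ℕ → Ω → ℝ := fun j ω => X M (2*j+1) ω * X M (2*j+2) ω with hWdef
  have hWmeas : ∀ j, Measurable (W j) := fun j => (hmeas M _).mul (hmeas M _)
  have haeX : ∀ i, ∀ᵐ ω ∂P, X M i ω = 1 ∨ X M i ω = -1 := fun i =>
    pm_one_ae (hmeas M i) (hdist M i).1 (hdist M i).2
  have haeW : ∀ j, ∀ᵐ ω ∂P, W j ω = 1 ∨ W j ω = -1 := by
    intro j
    filter_upwards [haeX (2*j+1), haeX (2*j+2)] with ω h1 h2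
    simp only [hWdef]
    rcases h1 with h|h <;> rcases h2 with h'|h' <;> rw [h, h'] <;> norm_num
  have haeWneg : ∀ j, ∀ᵐ ω ∂P, -(W j ω) = 1 ∨ -(W j ω) = -1 := by
    intro j
    filter_upwards [haeW j] with ω h
    rcases h with h|h <;> rw [h] <;> norm_num
  have hXint0 : ∀ p : ℕ × ℕ, ∫ ω, X p.1 p.2 ω ∂P = 0 := fun p =>
    pm_one_integral (hmeas p.1 p.2) (hdist p.1 p.2).1 (hdist p.1 p.2).2
  have hXbd : ∀ p : ℕ × ℕ, ∀ᵐ ω ∂P, |X p.1 p.2 ω| ≤ 1 := fun p =>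
    pm_one_abs_le (hmeas p.1 p.2) (hdist p.1 p.2).1 (hdist p.1 p.2).2
  have hprodW : ∀ Sf : Finset ℕ, Sf.Nonempty → ∫ ω, ∏ j ∈ Sf, W j ω ∂P = 0 := by
    intro Sf hSf
    set g : ℕ → Finset (ℕ × ℕ) := fun j => {(M, 2*j+1), (M, 2*j+2)} with hg
    have hdisjg : (↑Sf : Set ℕ).PairwiseDisjoint g := by
      intro a _ b _ hab
      simp only [Finset.disjoint_left, hg]
      intro p hp hq
      simp only [Finset.mem_insert, Finset.mem_singleton] at hp hq
      rcases hp with h|h <;> rcases hq with h'|h' <;>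
        (rw [h] at h'; rw [Prod.mk.injEq] at h'; omega)
    have hrw : ∀ ω, ∏ j ∈ Sf, W j ω = ∏ p ∈ Sf.biUnion g, X p.1 p.2 ω := by
      intro ω
      rw [Finset.prod_biUnion hdisjg]
      apply Finset.prod_congr rfl
      intro j _
      rw [hg]
      rw [Finset.prod_pair (by rw [Ne, Prod.mk.injEq]; omega)]
    simp_rw [hrw]
    rw [integral_finset_prod_eq_prod (fun p : ℕ×ℕ => X p.1 p.2) hindep
      (fun p => hmeas p.1 p.2) hXbd]
    obtain ⟨j, hj⟩ := hSf
    exact Finset.prod_eq_zero (i := (M, 2*j+1))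
      (Finset.mem_biUnion.2 ⟨j, hj, by simp [hg]⟩) (hXint0 (M, 2*j+1))
  have hprodWneg : ∀ Sf : Finset ℕ, Sf.Nonempty → ∫ ω, ∏ j ∈ Sf, (fun j ω => -(W j ω)) j ω ∂P = 0 := by
    intro Sf hSf
    have hpt : ∀ ω:Ω, ∏ j ∈ Sf, -(W j ω) = (-1)^Sf.card * ∏ j ∈ Sf, W j ω := by
      intro ω
      rw [← Finset.prod_const, ← Finset.prod_mul_distrib]
      simp
    simp only
    simp_rw [hpt]
    rw [MeasureTheory.integral_const_mul, hprodW Sf hSf, mul_zero]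
  set Good : Set Ω := {ω | ∀ i, X M i ω = 1 ∨ X M i ω = -1} with hGoodDef
  have hGoodae : ∀ᵐ ω ∂P, ω ∈ Good := by
    rw [hGoodDef]
    exact ae_all_iff.2 haeX
  have hGoodc : P Goodᶜ = 0 := by
    have h := hGoodae
    rw [ae_iff] at h
    convert h using 2
    rfl
  set Nm := ⌊Q⌋₊ with hNmdef
  have hNmQ : (Nm:ℝ) ≤ Q := Nat.floor_le hQpos.le
  set F := ⌊xm/2⌋₊ with hFdef
  set d := ⌈xm/2⌉₊ with hddef
  have hFxm : (F:ℝ) ≤ xm/2 := Nat.floor_le (by linarith)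
  have hFxm' : xm/2 ≤ (F:ℝ)+1 := le_of_lt (Nat.lt_floor_add_one _)
  have hdxm : xm/2 ≤ (d:ℝ) := Nat.le_ceil _
  have hdF : d ≤ F + 1 := Nat.ceil_le_floor_add_one _
  have hd1 : 1 ≤ d := by
    rw [hddef]
    exact Nat.one_le_ceil_iff.2 (by linarith)
  set n1 : ℕ → ℕ := fun k => 2*(k-1) + 1 + F with hn1def
  set n2 : ℕ → ℕ := fun k => 2*k + 1 - d with hn2def
  set Ach : ℕ → Set Ω := fun k =>
    {ω | (n1 k : ℝ) - 2*k + 2 ≤ ∑ j ∈ Finset.range (n1 k), -(W j ω)} with hAchdef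
  set Bch : ℕ → Set Ω := fun k =>
    {ω | 2*(k:ℝ) - n2 k ≤ ∑ j ∈ Finset.range (n2 k), W j ω} with hBchdef
  refine le_trans (measure_mono
    (?_ : _ ⊆ (⋃ k ∈ Finset.Icc 1 Nm, (Ach k ∪ Bch k)) ∪ Goodᶜ)) ?_
  · -- event inclusion
    intro ω hω
    by_cases hg : ω ∈ Good
    swap
    · exact Set.mem_union_right _ hg
    left
    simp only [Set.mem_setOf_eq] at hω
    obtain ⟨k, hkK, hthr⟩ := hω
    have hxo : ∀ i, X M i ω = 1 ∨ X M i ω = -1 := hg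
    -- rewrite powers
    have hz2m : (2:ℝ)^(-(2*(m:ℤ))) = ((4:ℝ)^m)⁻¹ := by
      rw [show -(2*(m:ℤ)) = -((2*m:ℕ):ℤ) by push_cast; ring, zpow_neg, zpow_natCast, pow_mul]
      norm_num
    have hz2m1 : (2:ℝ)^(-(2*((m:ℤ)+1))) = ((4:ℝ)^(M))⁻¹ := by
      rw [show -(2*((m:ℤ)+1)) = -((2*M:ℕ):ℤ) by rw [hMdef]; push_cast; ring,
        zpow_neg, zpow_natCast, pow_mul]
      norm_num
    have hzm : (2:ℝ)^(-(m:ℤ)) = B2⁻¹ := by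
      rw [zpow_neg, zpow_natCast, hB2]
    have hrpow : A ^ ((1:ℝ)/2) = c := by
      rw [hcdef, Real.sqrt_eq_rpow]
    have hmsqrt : (m:ℝ) ^ ((1:ℝ)/2) = Real.sqrt m := (Real.sqrt_eq_rpow _).symm
    rw [hz2m] at hkK
    rw [hz2m, hz2m1, hzm, hmsqrt, hrpow] at hthr
    have h4Mpos : (0:ℝ) < (4:ℝ)^M := by positivity
    have hthr' : xm ≤ |(T M k ω : ℝ) - 4*k| := by
      have hmul := mul_le_mul_of_nonneg_right hthr h4Mpos.le
      have he1 : c * Real.sqrt m * B2⁻¹ * (4:ℝ)^M = xm := by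
        rw [hMdef, pow_succ, h4m, hxmdef]
        field_simp
      have hinner : ((T M k ω:ℝ) * ((4:ℝ)^M)⁻¹ - (k:ℝ) * ((4:ℝ)^m)⁻¹) * (4:ℝ)^M
          = (T M k ω:ℝ) - 4*k := by
        rw [hMdef, pow_succ]
        field_simp
      have he2 : |(T M k ω:ℝ) * ((4:ℝ)^M)⁻¹ - (k:ℝ) * ((4:ℝ)^m)⁻¹| * (4:ℝ)^M
          = |(T M k ω:ℝ) - 4*k| := by
        calc |(T M k ω:ℝ) * ((4:ℝ)^M)⁻¹ - (k:ℝ) * ((4:ℝ)^m)⁻¹| * (4:ℝ)^M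
            = |(T M k ω:ℝ) * ((4:ℝ)^M)⁻¹ - (k:ℝ) * ((4:ℝ)^m)⁻¹| * |(4:ℝ)^M| := by
              rw [abs_of_pos h4Mpos]
        _ = |((T M k ω:ℝ) * ((4:ℝ)^M)⁻¹ - (k:ℝ) * ((4:ℝ)^m)⁻¹) * (4:ℝ)^M| :=
              (abs_mul _ _).symm
        _ = |(T M k ω:ℝ) - 4*k| := by rw [hinner]
      rw [he1, he2] at hmul
      exact hmul
    have hk1 : 1 ≤ k := by
      by_contra hlt
      push_neg at hlt
      interval_cases k
      rw [hT0] at hthr'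
      simp at hthr'
      linarith
    have hkNm : k ≤ Nm := by
      rw [hNmdef]
      apply Nat.le_floor
      rw [← div_eq_mul_inv, div_le_iff₀ h4mpos] at hkK
      rw [hQdef]
      linarith
    obtain ⟨k', rfl⟩ : ∃ k', k = k'+1 := ⟨k-1, by omega⟩
    have hkIcc : k'+1 ∈ Finset.Icc 1 Nm := Finset.mem_Icc.2 ⟨hk1, hkNm⟩
    have hn1k : n1 (k'+1) = 2*k' + 1 + F := by simp [hn1def]
    have hn1R : (n1 (k'+1) : ℝ) = 2*k' + 1 + F := by rw [hn1k]; push_cast; ring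
    have hiff0 := t_le_iff_struct (fun i => X M i ω) (fun n => S M n ω) (fun k => T M k ω)
      hxo (fun n => hS M n ω) (hT0 M ω) (fun k => hTsucc M k ω)
    have hwsum := wsum_eq (fun i => X M i ω) hxo
    by_cases hcase : k'+1 ≤ zcAux (fun i => X M i ω) (n1 (k'+1))
    · -- T is genuine; must be lower tail
      have hiff := hiff0 (k'+1) ⟨n1 (k'+1), hcase⟩
      have hTle : T M (k'+1) ω ≤ 2 * n1 (k'+1) := (hiff (n1 (k'+1))).2 hcase
      have hTleR : (T M (k'+1) ω : ℝ) ≤ 2*(n1 (k'+1)) := by exact_mod_cast hTle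
      have hTlow : (T M (k'+1) ω : ℝ) ≤ 4*((k'+1:ℕ):ℝ) - xm := by
        rcases le_abs.1 hthr' with h | h
        · exfalso
          rw [hn1R] at hTleR
          push_cast at h hTleR ⊢
          linarith [hFxm]
        · linarith
      have hTpos : (0:ℝ) ≤ (T M (k'+1) ω : ℝ) := Nat.cast_nonneg _
      have hd2k : d ≤ 2*(k'+1) := by
        have hxk : xm ≤ 4*((k'+1:ℕ):ℝ) := by linarith [hTpos]
        rw [hddef]
        apply Nat.ceil_le.2
        push_cast at hxk ⊢
        linarith
      have hn2k : n2 (k'+1) = 2*(k'+1) + 1 - d := by simp [hn2def]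
      have hn2R : (n2 (k'+1) : ℝ) = 2*((k'+1:ℕ):ℝ) + 1 - d := by
        rw [hn2k]
        have hle : d ≤ 2*(k'+1) + 1 := by omega
        rw [Nat.cast_sub hle]
        push_cast
        ring
      have hTn2 : T M (k'+1) ω ≤ 2 * n2 (k'+1) := by
        have hdr : (d:ℝ) ≤ F + 1 := by exact_mod_cast hdF
        have h2 : (T M (k'+1) ω : ℝ) ≤ 2*(n2 (k'+1) : ℝ) := by
          rw [hn2R]
          have hdr2 : (d:ℝ) ≤ (F:ℝ) + 1 := by exact_mod_cast hdF
          linarith [hFxm]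
        exact_mod_cast h2
      have hzn2 : k'+1 ≤ zcAux (fun i => X M i ω) (n2 (k'+1)) := (hiff (n2 (k'+1))).1 hTn2
      refine Set.mem_iUnion₂.2 ⟨k'+1, hkIcc, Or.inr ?_⟩
      simp only [hBchdef, Set.mem_setOf_eq]
      rw [hwsum (n2 (k'+1))]
      have : ((k'+1:ℕ):ℝ) ≤ (zcAux (fun i => X M i ω) (n2 (k'+1)) : ℝ) := by
        exact_mod_cast hzn2
      push_cast at this ⊢
      linarith
    · -- not enough successes: upper-tail event
      push_neg at hcase
      have hzle : (zcAux (fun i => X M i ω) (n1 (k'+1)) : ℝ) ≤ k' := by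
        have : zcAux (fun i => X M i ω) (n1 (k'+1)) ≤ k' := by omega
        exact_mod_cast this
      refine Set.mem_iUnion₂.2 ⟨k'+1, hkIcc, Or.inl ?_⟩
      simp only [hAchdef, Set.mem_setOf_eq]
      have hsneg : ∑ j ∈ Finset.range (n1 (k'+1)), -(W j ω)
          = -∑ j ∈ Finset.range (n1 (k'+1)), W j ω := by
        rw [Finset.sum_neg_distrib]
      rw [hsneg, hwsum (n1 (k'+1))]
      push_cast
      linarith
  · -- probability bound
    have hAbound : ∀ k ∈ Finset.Icc 1 Nm, P (Ach k) ≤ ENNReal.ofReal (Q^(-C)) := by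
      intro k hk
      obtain ⟨hk1, hkNm⟩ := Finset.mem_Icc.1 hk
      obtain ⟨k', rfl⟩ : ∃ k', k = k'+1 := ⟨k-1, by omega⟩
      have hn1k : n1 (k'+1) = 2*k' + 1 + F := by simp [hn1def]
      have hn1R : (n1 (k'+1) : ℝ) = 2*k' + 1 + F := by rw [hn1k]; push_cast; ring
      have hn1pos : 0 < n1 (k'+1) := by rw [hn1k]; omega
      have hspos : (0:ℝ) ≤ (n1 (k'+1) : ℝ) - 2*((k'+1:ℕ):ℝ) + 2 := by
        rw [hn1R]; push_cast; linarith [Nat.cast_nonneg (α := ℝ) F]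
      have hch := chernoff_pm (P := P) (fun j ω => -(W j ω)) (n1 (k'+1)) hn1pos
        (fun j => (hWmeas j).neg) haeWneg hprodWneg
        ((n1 (k'+1) : ℝ) - 2*((k'+1:ℕ):ℝ) + 2) hspos
      refine le_trans (le_of_eq ?_) (le_trans hch (ENNReal.ofReal_le_ofReal ?_))
      · congr 1
      · apply hkey
        · exact_mod_cast hn1pos
        · rw [hn1R]; push_cast; linarith
        · rw [hn1R]
          have hkQ : ((k'+1:ℕ):ℝ) ≤ Q := le_trans (by exact_mod_cast hkNm) hNmQ
          have h2F : 2*(F:ℝ) ≤ xm := by linarith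
          push_cast at hkQ ⊢
          linarith
    have hBbound : ∀ k ∈ Finset.Icc 1 Nm, P (Bch k) ≤ ENNReal.ofReal (Q^(-C)) := by
      intro k hk
      obtain ⟨hk1, hkNm⟩ := Finset.mem_Icc.1 hk
      by_cases hn2pos : 0 < n2 k
      · have hd2k1 : d < 2*k + 1 := by
          rw [hn2def] at hn2pos
          simp at hn2pos
          omega
        have hn2R : (n2 k : ℝ) = 2*(k:ℝ) + 1 - d := by
          show ((2*k + 1 - d : ℕ) : ℝ) = 2*(k:ℝ) + 1 - d
          rw [Nat.cast_sub (by omega)]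
          push_cast
          ring
        have hs2 : (0:ℝ) ≤ 2*(k:ℝ) - n2 k := by
          rw [hn2R]
          have : (1:ℝ) ≤ d := by exact_mod_cast hd1
          linarith
        have hch := chernoff_pm (P := P) W (n2 k) hn2pos hWmeas haeW hprodW
          (2*(k:ℝ) - n2 k) hs2
        refine le_trans hch (ENNReal.ofReal_le_ofReal ?_)
        apply hkey
        · exact_mod_cast hn2pos
        · rw [hn2R]
          linarith
        · have hkQ : (k:ℝ) ≤ Q := le_trans (by exact_mod_cast hkNm) hNmQ
          rw [hn2R]
          have : (1:ℝ) ≤ d := by exact_mod_cast hd1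
          linarith
      · have hBempty : Bch k = ∅ := by
          have h0 : n2 k = 0 := by omega
          rw [hBchdef]
          simp only [h0]
          ext ω
          simp only [Set.mem_setOf_eq, Finset.range_zero, Finset.sum_empty, Nat.cast_zero,
            Set.mem_empty_iff_false, iff_false, not_le]
          have : (1:ℝ) ≤ (k:ℝ) := by exact_mod_cast hk1
          linarith
        rw [hBempty]
        simp
    calc P ((⋃ k ∈ Finset.Icc 1 Nm, (Ach k ∪ Bch k)) ∪ Goodᶜ)
        ≤ P (⋃ k ∈ Finset.Icc 1 Nm, (Ach k ∪ Bch k)) + P Goodᶜ := measure_union_le _ _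
    _ = P (⋃ k ∈ Finset.Icc 1 Nm, (Ach k ∪ Bch k)) := by rw [hGoodc, add_zero]
    _ ≤ ∑ k ∈ Finset.Icc 1 Nm, P (Ach k ∪ Bch k) := measure_biUnion_finset_le _ _
    _ ≤ ∑ k ∈ Finset.Icc 1 Nm, (ENNReal.ofReal (Q^(-C)) + ENNReal.ofReal (Q^(-C))) := by
        apply Finset.sum_le_sum
        intro k hk
        exact le_trans (measure_union_le _ _) (add_le_add (hAbound k hk) (hBbound k hk))
    _ = Nm • (ENNReal.ofReal (Q^(-C)) + ENNReal.ofReal (Q^(-C))) := by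
        rw [Finset.sum_const, Nat.card_Icc, Nat.add_sub_cancel]
    _ ≤ ENNReal.ofReal (2 * (K * 2^(2*m)) ^ (1 - C)) := by
        have hrnn : (0:ℝ) ≤ Q^(-C) := Real.rpow_nonneg hQpos.le _
        have h1 : ENNReal.ofReal (Q^(-C)) + ENNReal.ofReal (Q^(-C))
            = ENNReal.ofReal (2 * Q^(-C)) := by
          rw [← ENNReal.ofReal_add hrnn hrnn]
          congr 1
          ring
        rw [h1, nsmul_eq_mul, ← ENNReal.ofReal_natCast Nm,
          ← ENNReal.ofReal_mul (Nat.cast_nonneg _)]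
        apply ENNReal.ofReal_le_ofReal
        have hQ2m : K * (2:ℝ)^(2*m) = Q := by rw [hQdef, pow_mul]; norm_num
        rw [hQ2m]
        have hsplit : Q ^ (1-C) = Q * Q^(-C) := by
          rw [show (1:ℝ)-C = 1 + (-C) by ring, Real.rpow_add hQpos, Real.rpow_one]
        rw [hsplit]
        linarith only [mul_nonneg (sub_nonneg.2 hNmQ) hrnn]
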